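/- For every n ≥ 1, the generalized discrete Heisenberg group H_{2n+1} admits a positive cone with infinite conjugacy orbit: there exists a positive cone P of H_{2n+1} such that the set {g⁻¹Pg : g ∈ H_{2n+1}} of conjugates of P is infinite. -/
import Mathlib


open Matrix

/-- The defining pattern of a (generalized) Heisenberg matrix: block form
`(1 a c; 0 Iₙ bᵀ; 0 0 1)`, i.e. ones on the diagonal and zeros everywhere outside the
first row, the last column and the diagonal. -/
def IsHeisMat (n : ℕ) (M : Matrix (Fin (n + 2)) (Fin (n + 2)) ℤ) : Prop :=
  (∀ i, M i i = 1) ∧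
  ∀ i j : Fin (n + 2), i ≠ j → i ≠ 0 → j ≠ Fin.last (n + 1) → M i j = 0

namespace IsHeisMat

variable {n : ℕ}

lemma zero_ne_last : (0 : Fin (n + 2)) ≠ Fin.last (n + 1) := by
  simp [Fin.ext_iff]

lemma one (n : ℕ) : IsHeisMat n 1 := by
  constructor
  · intro i; simp
  · intro i j hij _ _; simp [Matrix.one_apply, hij]

lemma mul {M N : Matrix (Fin (n + 2)) (Fin (n + 2)) ℤ}
    (hM : IsHeisMat n M) (hN : IsHeisMat n N) : IsHeisMat n (M * N) := by
  constructor
  · intro i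
    rw [Matrix.mul_apply, Finset.sum_eq_single i]
    · rw [hM.1, hN.1, one_mul]
    · intro l _ hl
      by_cases hi0 : i = 0
      · subst hi0
        rw [hN.2 l 0 hl hl zero_ne_last, mul_zero]
      · by_cases hll : l = Fin.last (n + 1)
        · subst hll
          rw [hN.2 (Fin.last (n + 1)) i hl zero_ne_last.symm (Ne.symm hl), mul_zero]
        · rw [hM.2 i l (Ne.symm hl) hi0 hll, zero_mul]
    · intro hi; exact absurd (Finset.mem_univ i) hi
  · intro i j hij hi0 hjl
    rw [Matrix.mul_apply, Finset.sum_eq_zero]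
    intro l _
    by_cases hll : l = Fin.last (n + 1)
    · subst hll
      rw [hN.2 (Fin.last (n + 1)) j (Ne.symm hjl) (Ne.symm zero_ne_last) hjl, mul_zero]
    · by_cases hil : i = l
      · subst hil
        rw [hN.2 i j hij hi0 hjl, mul_zero]
      · rw [hM.2 i l hil hi0 hll, zero_mul]

end IsHeisMat

section InvAux

variable {n : ℕ} {X : Matrix (Fin (n + 2)) (Fin (n + 2)) ℤ}

lemma sq_supp (hx1 : ∀ i, X i i = 0)
    (hx2 : ∀ i j, i ≠ 0 → j ≠ Fin.last (n + 1) → X i j = 0) :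
    ∀ i j, ¬(i = 0 ∧ j = Fin.last (n + 1)) → (X * X) i j = 0 := by
  intro i j hij
  rw [Matrix.mul_apply, Finset.sum_eq_zero]
  intro l _
  by_cases hi0 : i = 0
  · have hjl : j ≠ Fin.last (n + 1) := fun h => hij ⟨hi0, h⟩
    by_cases hl0 : l = 0
    · subst hi0; subst hl0; rw [hx1 0, zero_mul]
    · rw [hx2 l j hl0 hjl, mul_zero]
  · by_cases hll : l = Fin.last (n + 1)
    · subst hll
      by_cases hjl : j = Fin.last (n + 1)
      · subst hjl; rw [hx1, mul_zero]
      · rw [hx2 _ j IsHeisMat.zero_ne_last.symm hjl, mul_zero]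
    · rw [hx2 i l hi0 hll, zero_mul]

lemma cube_zero (hx1 : ∀ i, X i i = 0)
    (hx2 : ∀ i j, i ≠ 0 → j ≠ Fin.last (n + 1) → X i j = 0) :
    X * X * X = 0 := by
  ext i j
  rw [Matrix.mul_apply, Matrix.zero_apply, Finset.sum_eq_zero]
  intro l _
  by_cases h : i = 0 ∧ l = Fin.last (n + 1)
  · obtain ⟨hi0, hll⟩ := h
    subst hll
    by_cases hjl : j = Fin.last (n + 1)
    · subst hjl; rw [hx1, mul_zero]
    · rw [hx2 _ j IsHeisMat.zero_ne_last.symm hjl, mul_zero]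
  · rw [sq_supp hx1 hx2 i l h, zero_mul]

end InvAux

/-- The generalized discrete Heisenberg group `H_{2n+1}`, realized as the subgroup of the
units of the ring of `(n+2) × (n+2)` integer matrices consisting of the matrices of block
form `(1 a c; 0 Iₙ bᵀ; 0 0 1)`. -/
def Heisenberg (n : ℕ) : Subgroup (Matrix (Fin (n + 2)) (Fin (n + 2)) ℤ)ˣ where
  carrier := {U | IsHeisMat n U.val}
  one_mem' := IsHeisMat.one n
  mul_mem' hA hB := IsHeisMat.mul hA hB
  inv_mem' := by
    intro U hU
    replace hU : IsHeisMat n U.val := hU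
    set M : Matrix (Fin (n + 2)) (Fin (n + 2)) ℤ := U.val with hMdef
    set X : Matrix (Fin (n + 2)) (Fin (n + 2)) ℤ := M - 1 with hXdef
    have hx1 : ∀ i, X i i = 0 := by
      intro i; simp [hXdef, Matrix.sub_apply, hU.1 i]
    have hx2 : ∀ i j, i ≠ 0 → j ≠ Fin.last (n + 1) → X i j = 0 := by
      intro i j hi0 hjl
      by_cases hij : i = j
      · subst hij; exact hx1 i
      · simp [hXdef, Matrix.sub_apply, hU.2 i j hij hi0 hjl, Matrix.one_apply_ne hij]
    have hM1 : M = 1 + X := by rw [hXdef]; abel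
    have hcube : X * X * X = 0 := cube_zero hx1 hx2
    have hright : M * (1 - X + X * X) = 1 := by
      rw [hM1]
      have : (1 + X) * (1 - X + X * X) = 1 + X * X * X := by noncomm_ring
      rw [this, hcube, add_zero]
    have hinv : (U⁻¹).val = 1 - X + X * X := Units.inv_eq_of_mul_eq_one_right hright
    show IsHeisMat n _
    rw [hinv]
    constructor
    · intro i
      have h2 : (X * X) i i = 0 :=
        sq_supp hx1 hx2 i i (by rintro ⟨h0, hl⟩; exact IsHeisMat.zero_ne_last (h0 ▸ hl))
      simp [Matrix.add_apply, Matrix.sub_apply, hx1 i, h2]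
    · intro i j hij hi0 hjl
      have h2 : (X * X) i j = 0 := sq_supp hx1 hx2 i j (fun h => hi0 h.1)
      simp [Matrix.add_apply, Matrix.sub_apply, hx2 i j hi0 hjl, h2,
        Matrix.one_apply_ne hij]

/-- A positive cone of a group `G`: a subsemigroup `P` such that `G` is the disjoint
union of `P`, `P⁻¹` and `{1}`. -/
def IsPositiveCone {G : Type*} [Group G] (P : Set G) : Prop :=
  (∀ a ∈ P, ∀ b ∈ P, a * b ∈ P) ∧
  (∀ g : G, g ∈ P ∨ g⁻¹ ∈ P ∨ g = 1) ∧
  (∀ g ∈ P, g⁻¹ ∉ P) ∧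
  (1 : G) ∉ P

/-- The conjugate `g⁻¹ P g` of a subset `P` of a group. -/
def conjCone {G : Type*} [Group G] (g : G) (P : Set G) : Set G :=
  (fun p => g⁻¹ * p * g) '' P

/- ------------------ Auxiliary infrastructure ------------------ -/

section HeisCoords

instance heisWFFin (m : ℕ) : WellFoundedLT (Fin m) := Finite.to_wellFoundedLT

variable {n : ℕ}

/-- The middle indices `1, …, n` of `Fin (n+2)`. -/
def hcol (i : Fin n) : Fin (n + 2) := i.castSucc.succ

lemma hcol_ne_zero (i : Fin n) : hcol i ≠ 0 := Fin.succ_ne_zero _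

lemma hcol_val (i : Fin n) : (hcol i).val = i.val + 1 := rfl

lemma hcol_ne_last (i : Fin n) : hcol i ≠ Fin.last (n + 1) := by
  have hi := i.isLt
  intro h
  have h' := congrArg Fin.val h
  rw [hcol_val, Fin.val_last] at h'
  omega

lemma hcol_injective : Function.Injective (hcol (n := n)) := by
  intro i j h
  have := congrArg Fin.val h
  simp only [hcol, Fin.val_succ, Fin.coe_castSucc] at this
  exact Fin.ext (by omega)

lemma exists_hcol {j : Fin (n + 2)} (h0 : j ≠ 0) (hl : j ≠ Fin.last (n + 1)) :
    ∃ i : Fin n, hcol i = j := by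
  have h0' : j.val ≠ 0 := fun hh => h0 (Fin.ext (by simp [hh]))
  have hl' : j.val ≠ n + 1 := fun hh => hl (Fin.ext (by simp [hh]))
  have hlt := j.isLt
  refine ⟨⟨j.val - 1, by omega⟩, ?_⟩
  apply Fin.ext
  rw [hcol_val]
  simp only []
  omega

lemma hsum_split (f : Fin (n + 2) → ℤ) :
    ∑ l, f l = f 0 + ((∑ i : Fin n, f (hcol i)) + f (Fin.last (n + 1))) := by
  rw [Fin.sum_univ_succ]
  congr 1
  rw [Fin.sum_univ_castSucc]
  simp [hcol, Fin.succ_last]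

/-- The `a`-coordinates of a Heisenberg element. -/
def avH (U : ↥(Heisenberg n)) : Fin n → ℤ := fun i => U.val.val 0 (hcol i)

/-- The `b`-coordinates of a Heisenberg element. -/
def bvH (U : ↥(Heisenberg n)) : Fin n → ℤ := fun i => U.val.val (hcol i) (Fin.last (n + 1))

/-- The `c`-coordinate of a Heisenberg element. -/
def cvH (U : ↥(Heisenberg n)) : ℤ := U.val.val 0 (Fin.last (n + 1))

lemma heisProp (U : ↥(Heisenberg n)) : IsHeisMat n U.val.val := U.2

lemma avH_one : avH (1 : ↥(Heisenberg n)) = 0 := by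
  funext i
  show (1 : Matrix (Fin (n + 2)) (Fin (n + 2)) ℤ) 0 (hcol i) = 0
  exact Matrix.one_apply_ne (hcol_ne_zero i).symm

lemma bvH_one : bvH (1 : ↥(Heisenberg n)) = 0 := by
  funext i
  show (1 : Matrix (Fin (n + 2)) (Fin (n + 2)) ℤ) (hcol i) (Fin.last (n + 1)) = 0
  exact Matrix.one_apply_ne (hcol_ne_last i)

lemma cvH_one : cvH (1 : ↥(Heisenberg n)) = 0 := by
  show (1 : Matrix (Fin (n + 2)) (Fin (n + 2)) ℤ) 0 (Fin.last (n + 1)) = 0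
  exact Matrix.one_apply_ne IsHeisMat.zero_ne_last

lemma avH_mul (U V : ↥(Heisenberg n)) : avH (U * V) = avH U + avH V := by
  funext i
  have hU := heisProp U
  have hV := heisProp V
  show (U.val.val * V.val.val) 0 (hcol i) = avH U i + avH V i
  rw [Matrix.mul_apply, hsum_split]
  have h0 : U.val.val 0 0 * V.val.val 0 (hcol i) = avH V i := by
    rw [hU.1, one_mul]; rfl
  have hmid : (∑ k : Fin n, U.val.val 0 (hcol k) * V.val.val (hcol k) (hcol i)) = avH U i := by
    rw [Finset.sum_eq_single i]
    · rw [hV.1, mul_one]; rfl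
    · intro k _ hk
      rw [hV.2 (hcol k) (hcol i) (fun h => hk (hcol_injective h)) (hcol_ne_zero k)
        (hcol_ne_last i), mul_zero]
    · intro h; exact absurd (Finset.mem_univ i) h
  have hlast : U.val.val 0 (Fin.last (n + 1)) * V.val.val (Fin.last (n + 1)) (hcol i) = 0 := by
    rw [hV.2 (Fin.last (n + 1)) (hcol i) (Ne.symm (hcol_ne_last i))
      IsHeisMat.zero_ne_last.symm (hcol_ne_last i), mul_zero]
  rw [h0, hmid, hlast, add_zero, add_comm]

lemma bvH_mul (U V : ↥(Heisenberg n)) : bvH (U * V) = bvH U + bvH V := by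
  funext i
  have hU := heisProp U
  have hV := heisProp V
  show (U.val.val * V.val.val) (hcol i) (Fin.last (n + 1)) = bvH U i + bvH V i
  rw [Matrix.mul_apply, hsum_split]
  have h0 : U.val.val (hcol i) 0 * V.val.val 0 (Fin.last (n + 1)) = 0 := by
    rw [hU.2 (hcol i) 0 (hcol_ne_zero i) (hcol_ne_zero i) IsHeisMat.zero_ne_last, zero_mul]
  have hmid : (∑ k : Fin n, U.val.val (hcol i) (hcol k) * V.val.val (hcol k) (Fin.last (n + 1)))
      = bvH V i := by
    rw [Finset.sum_eq_single i]
    · rw [hU.1, one_mul]; rfl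
    · intro k _ hk
      rw [hU.2 (hcol i) (hcol k) (fun h => hk (hcol_injective h).symm) (hcol_ne_zero i)
        (hcol_ne_last k), zero_mul]
    · intro h; exact absurd (Finset.mem_univ i) h
  have hlast : U.val.val (hcol i) (Fin.last (n + 1)) * V.val.val (Fin.last (n + 1))
      (Fin.last (n + 1)) = bvH U i := by
    rw [hV.1, mul_one]; rfl
  rw [h0, hmid, hlast, zero_add, add_comm]

lemma cvH_mul (U V : ↥(Heisenberg n)) :
    cvH (U * V) = cvH U + cvH V + ∑ i : Fin n, avH U i * bvH V i := by
  have hU := heisProp U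
  have hV := heisProp V
  show (U.val.val * V.val.val) 0 (Fin.last (n + 1)) = _
  rw [Matrix.mul_apply, hsum_split]
  have h0 : U.val.val 0 0 * V.val.val 0 (Fin.last (n + 1)) = cvH V := by
    rw [hU.1, one_mul]; rfl
  have hlast : U.val.val 0 (Fin.last (n + 1)) * V.val.val (Fin.last (n + 1))
      (Fin.last (n + 1)) = cvH U := by
    rw [hV.1, mul_one]; rfl
  rw [h0, hlast]
  have hmid : (∑ k : Fin n, U.val.val 0 (hcol k) * V.val.val (hcol k) (Fin.last (n + 1)))
      = ∑ i : Fin n, avH U i * bvH V i := rfl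
  rw [hmid]
  ring

lemma avH_inv (U : ↥(Heisenberg n)) : avH U⁻¹ = -avH U := by
  have h := avH_mul U U⁻¹
  rw [mul_inv_cancel, avH_one] at h
  funext i
  have := congrFun h i
  simp only [Pi.add_apply, Pi.zero_apply] at this
  simp only [Pi.neg_apply]
  linarith

lemma bvH_inv (U : ↥(Heisenberg n)) : bvH U⁻¹ = -bvH U := by
  have h := bvH_mul U U⁻¹
  rw [mul_inv_cancel, bvH_one] at h
  funext i
  have := congrFun h i
  simp only [Pi.add_apply, Pi.zero_apply] at this
  simp only [Pi.neg_apply]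
  linarith

lemma cvH_inv (U : ↥(Heisenberg n)) :
    cvH U⁻¹ = -cvH U + ∑ i : Fin n, avH U i * bvH U i := by
  have h := cvH_mul U U⁻¹
  rw [mul_inv_cancel, cvH_one, bvH_inv] at h
  have hs : (∑ i : Fin n, avH U i * (-bvH U) i) = -∑ i : Fin n, avH U i * bvH U i := by
    simp [mul_neg]
  rw [hs] at h
  linarith

lemma heis_eq_one (U : ↥(Heisenberg n)) (ha : avH U = 0) (hb : bvH U = 0) (hc : cvH U = 0) :
    U = 1 := by
  have hU := heisProp U
  apply Subtype.ext
  apply Units.ext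
  show U.val.val = 1
  ext i j
  by_cases hij : i = j
  · subst hij
    rw [hU.1, Matrix.one_apply_eq]
  · rw [Matrix.one_apply_ne hij]
    by_cases hi0 : i = 0
    · subst hi0
      by_cases hjl : j = Fin.last (n + 1)
      · subst hjl; exact hc
      · obtain ⟨k, rfl⟩ := exists_hcol (Ne.symm hij) hjl
        exact congrFun ha k
    · by_cases hjl : j = Fin.last (n + 1)
      · subst hjl
        obtain ⟨k, rfl⟩ := exists_hcol hi0 hij
        exact congrFun hb k
      · exact hU.2 i j hij hi0 hjl

lemma conj_avH (g h : ↥(Heisenberg n)) (hah : avH h = 0) : avH (g * h * g⁻¹) = 0 := by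
  rw [avH_mul, avH_mul, hah, avH_inv]
  abel

lemma conj_bvH (g h : ↥(Heisenberg n)) : bvH (g * h * g⁻¹) = bvH h := by
  rw [bvH_mul, bvH_mul, bvH_inv]
  abel

lemma conj_cvH (g h : ↥(Heisenberg n)) (hah : avH h = 0) :
    cvH (g * h * g⁻¹) = cvH h + ∑ i : Fin n, avH g i * bvH h i := by
  rw [cvH_mul, cvH_mul, cvH_inv, avH_mul, hah, bvH_inv]
  have h1 : (∑ i : Fin n, (avH g + 0) i * (-bvH g) i) = -∑ i : Fin n, avH g i * bvH g i := by
    simp [mul_neg]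
  rw [h1]
  ring

/-- The strictly-upper-triangular matrix with coordinates `a`, `b`, `c`. -/
def heisX (a b : Fin n → ℤ) (c : ℤ) : Matrix (Fin (n + 2)) (Fin (n + 2)) ℤ :=
  Matrix.of fun i j =>
    if hi : i = 0 then
      if hj : j = Fin.last (n + 1) then c
      else if hj0 : j = 0 then 0
      else a ⟨j.val - 1, by
        have hlt := j.isLt
        have h0' : j.val ≠ 0 := fun hh => hj0 (Fin.ext (by simp [hh]))
        have hl' : j.val ≠ n + 1 := fun hh => hj (Fin.ext (by simp [hh]))
        omega⟩
    else
      if hjl : j = Fin.last (n + 1) then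
        if hil : i = Fin.last (n + 1) then 0
        else b ⟨i.val - 1, by
          have hlt := i.isLt
          have h0' : i.val ≠ 0 := fun hh => hi (Fin.ext (by simp [hh]))
          have hl' : i.val ≠ n + 1 := fun hh => hil (Fin.ext (by simp [hh]))
          omega⟩
      else 0

lemma heisX_diag (a b : Fin n → ℤ) (c : ℤ) (i : Fin (n + 2)) : heisX a b c i i = 0 := by
  show (if hi : i = 0 then _ else _) = 0
  by_cases hi : i = 0
  · subst hi
    rw [dif_pos rfl, dif_neg IsHeisMat.zero_ne_last, dif_pos rfl]
  · by_cases hil : i = Fin.last (n + 1)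
    · rw [dif_neg hi, dif_pos hil, dif_pos hil]
    · rw [dif_neg hi, dif_neg hil]

lemma heisX_supp (a b : Fin n → ℤ) (c : ℤ) (i j : Fin (n + 2)) (hi0 : i ≠ 0)
    (hjl : j ≠ Fin.last (n + 1)) : heisX a b c i j = 0 := by
  show (if hi : i = 0 then _ else _) = 0
  rw [dif_neg hi0, dif_neg hjl]

lemma heisX_a (a b : Fin n → ℤ) (c : ℤ) (i : Fin n) : heisX a b c 0 (hcol i) = a i := by
  unfold heisX
  rw [Matrix.of_apply, dif_pos rfl, dif_neg (hcol_ne_last i), dif_neg (hcol_ne_zero i)]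
  exact congrArg a (Fin.ext rfl)

lemma heisX_b (a b : Fin n → ℤ) (c : ℤ) (i : Fin n) :
    heisX a b c (hcol i) (Fin.last (n + 1)) = b i := by
  unfold heisX
  rw [Matrix.of_apply, dif_neg (hcol_ne_zero i), dif_pos rfl, dif_neg (hcol_ne_last i)]
  exact congrArg b (Fin.ext rfl)

lemma heisX_c (a b : Fin n → ℤ) (c : ℤ) : heisX a b c 0 (Fin.last (n + 1)) = c := by
  unfold heisX
  rw [Matrix.of_apply, dif_pos rfl, dif_pos rfl]

/-- Build a Heisenberg group element from coordinates. -/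
def mkHeis (a b : Fin n → ℤ) (c : ℤ) : ↥(Heisenberg n) := by
  set X := heisX a b c with hX
  have hx1 : ∀ i, X i i = 0 := heisX_diag a b c
  have hx2 : ∀ i j, i ≠ 0 → j ≠ Fin.last (n + 1) → X i j = 0 := fun i j hi hj =>
    heisX_supp a b c i j hi hj
  have hcube : X * X * X = 0 := cube_zero hx1 hx2
  have h1 : (1 + X) * (1 - X + X * X) = 1 := by
    have : (1 + X) * (1 - X + X * X) = 1 + X * X * X := by noncomm_ring
    rw [this, hcube, add_zero]
  have h2 : (1 - X + X * X) * (1 + X) = 1 := by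
    have : (1 - X + X * X) * (1 + X) = 1 + X * X * X := by noncomm_ring
    rw [this, hcube, add_zero]
  refine ⟨⟨1 + X, 1 - X + X * X, h1, h2⟩, ?_⟩
  show IsHeisMat n (1 + X)
  constructor
  · intro i
    rw [Matrix.add_apply, Matrix.one_apply_eq, hx1, add_zero]
  · intro i j hij hi0 hjl
    rw [Matrix.add_apply, Matrix.one_apply_ne hij, hx2 i j hi0 hjl, add_zero]

lemma avH_mkHeis (a b : Fin n → ℤ) (c : ℤ) : avH (mkHeis a b c) = a := by
  funext i
  show (1 + heisX a b c) 0 (hcol i) = a i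
  rw [Matrix.add_apply, Matrix.one_apply_ne (hcol_ne_zero i).symm, heisX_a, zero_add]

lemma bvH_mkHeis (a b : Fin n → ℤ) (c : ℤ) : bvH (mkHeis a b c) = b := by
  funext i
  show (1 + heisX a b c) (hcol i) (Fin.last (n + 1)) = b i
  rw [Matrix.add_apply, Matrix.one_apply_ne (hcol_ne_last i), heisX_b, zero_add]

lemma cvH_mkHeis (a b : Fin n → ℤ) (c : ℤ) : cvH (mkHeis a b c) = c := by
  show (1 + heisX a b c) 0 (Fin.last (n + 1)) = c
  rw [Matrix.add_apply, Matrix.one_apply_ne IsHeisMat.zero_ne_last, heisX_c, zero_add]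

/-- The positive cone: lexicographic in `a`, then `c`, then lexicographic in `b`. -/
def heisCone (n : ℕ) : Set ↥(Heisenberg n) :=
  {U | 0 < toLex (avH U) ∨ (avH U = 0 ∧ (0 < cvH U ∨ (cvH U = 0 ∧ 0 < toLex (bvH U))))}

lemma toLex_add' {m : ℕ} (x y : Fin m → ℤ) : toLex (x + y) = toLex x + toLex y := rfl

lemma toLex_neg' {m : ℕ} (x : Fin m → ℤ) : toLex (-x) = -toLex x := rfl

lemma toLex_zero' {m : ℕ} : toLex (0 : Fin m → ℤ) = 0 := rfl

lemma toLex_eq_zero_iff {m : ℕ} {x : Fin m → ℤ} : toLex x = 0 ↔ x = 0 :=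
  ⟨fun h => toLex.injective h, fun h => by rw [h]; rfl⟩

lemma toLex_pos_of {m : ℕ} {x : Fin m → ℤ} (h0 : 0 ≤ x) (hne : x ≠ 0) :
    0 < toLex x := by
  refine lt_of_le_of_ne (Pi.toLex_monotone h0) ?_
  intro h
  exact hne (toLex.injective h.symm)

lemma mem_conjCone {G : Type*} [Group G] {g h : G} {P : Set G} :
    h ∈ conjCone g P ↔ g * h * g⁻¹ ∈ P := by
  constructor
  · rintro ⟨p, hp, rfl⟩
    simpa [mul_assoc] using hp
  · intro hp
    exact ⟨g * h * g⁻¹, hp, by group⟩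

end HeisCoords

/-- For every `n ≥ 1` the generalized discrete Heisenberg group `H_{2n+1}` has a positive
cone whose conjugacy orbit is infinite. -/
theorem heisenberg_cone_with_infinite_orbit (n : ℕ) (hn : 1 ≤ n) :
    ∃ P : Set ↥(Heisenberg n), IsPositiveCone P ∧
      {Q : Set ↥(Heisenberg n) | ∃ g : ↥(Heisenberg n), Q = conjCone g P}.Infinite := by
  refine ⟨heisCone n, ⟨?_, ?_, ?_, ?_⟩, ?_⟩
  · -- closure under multiplication
    intro U hU V hV
    simp only [heisCone, Set.mem_setOf_eq] at hU hV ⊢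
    rcases hU with hU | ⟨haU, hU⟩
    · rcases hV with hV | ⟨haV, hV⟩
      · left; rw [avH_mul, toLex_add']; exact add_pos hU hV
      · left; rw [avH_mul, haV, add_zero]; exact hU
    · rcases hV with hV | ⟨haV, hV⟩
      · left; rw [avH_mul, haU, zero_add]; exact hV
      · right
        have ha : avH (U * V) = 0 := by rw [avH_mul, haU, haV, add_zero]
        refine ⟨ha, ?_⟩
        have hc : cvH (U * V) = cvH U + cvH V := by
          rw [cvH_mul, haU]
          simp
        have hb : bvH (U * V) = bvH U + bvH V := bvH_mul U V
        rcases hU with hcU | ⟨hcU, hbU⟩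
        · rcases hV with hcV | ⟨hcV, hbV⟩
          · left; rw [hc]; exact add_pos hcU hcV
          · left; rw [hc, hcV, add_zero]; exact hcU
        · rcases hV with hcV | ⟨hcV, hbV⟩
          · left; rw [hc, hcU, zero_add]; exact hcV
          · right
            refine ⟨by rw [hc, hcU, hcV, add_zero], ?_⟩
            rw [hb, toLex_add']
            exact add_pos hbU hbV
  · -- trichotomy
    intro U
    simp only [heisCone, Set.mem_setOf_eq]
    rcases lt_trichotomy (toLex (avH U)) 0 with h | h | h
    · right; left; left
      rw [avH_inv, toLex_neg']
      exact neg_pos.mpr h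
    · have haU : avH U = 0 := toLex_eq_zero_iff.mp h
      have haUinv : avH U⁻¹ = 0 := by rw [avH_inv, haU, neg_zero]
      have hcUinv : cvH U⁻¹ = -cvH U := by
        rw [cvH_inv, haU]
        simp
      rcases lt_trichotomy (cvH U) 0 with hc | hc | hc
      · right; left; right
        exact ⟨haUinv, Or.inl (by rw [hcUinv]; linarith)⟩
      · rcases lt_trichotomy (toLex (bvH U)) 0 with hb | hb | hb
        · right; left; right
          refine ⟨haUinv, Or.inr ⟨by rw [hcUinv, hc, neg_zero], ?_⟩⟩
          rw [bvH_inv, toLex_neg']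
          exact neg_pos.mpr hb
        · right; right
          exact heis_eq_one U haU (toLex_eq_zero_iff.mp hb) hc
        · left; right; exact ⟨haU, Or.inr ⟨hc, hb⟩⟩
      · left; right; exact ⟨haU, Or.inl hc⟩
    · left; left; exact h
  · -- disjointness
    intro U hU hU'
    simp only [heisCone, Set.mem_setOf_eq] at hU hU'
    rcases hU with hU | ⟨haU, hU⟩
    · rcases hU' with hU' | ⟨haU', _⟩
      · rw [avH_inv, toLex_neg'] at hU'
        exact absurd hU (asymm (neg_pos.mp hU'))
      · rw [avH_inv, neg_eq_zero] at haU'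
        rw [haU', toLex_zero'] at hU
        exact lt_irrefl _ hU
    · rcases hU' with hU' | ⟨haU', hU'⟩
      · rw [avH_inv, haU, neg_zero, toLex_zero'] at hU'
        exact lt_irrefl _ hU'
      · have hcUinv : cvH U⁻¹ = -cvH U := by
          rw [cvH_inv, haU]
          simp
        rcases hU with hcU | ⟨hcU, hbU⟩
        · rcases hU' with hcU' | ⟨hcU', _⟩
          · rw [hcUinv] at hcU'; linarith
          · rw [hcUinv] at hcU'; linarith
        · rcases hU' with hcU' | ⟨hcU', hbU'⟩
          · rw [hcUinv, hcU, neg_zero] at hcU'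
            exact lt_irrefl _ hcU'
          · rw [bvH_inv, toLex_neg'] at hbU'
            exact absurd hbU (asymm (neg_pos.mp hbU'))
  · -- 1 ∉ P
    intro h
    simp only [heisCone, Set.mem_setOf_eq, avH_one, bvH_one, cvH_one, toLex_zero'] at h
    rcases h with h | ⟨-, h | ⟨-, h⟩⟩ <;> exact lt_irrefl _ h
  · -- infinitely many conjugates
    have hn0 : (0 : ℕ) < n := hn
    set e0 : Fin n := ⟨0, hn0⟩ with he0
    set gm : ℤ → ↥(Heisenberg n) := fun m => mkHeis (Pi.single e0 m) 0 0 with hgm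
    have hbpos : 0 < toLex (Pi.single e0 1 : Fin n → ℤ) := by
      refine toLex_pos_of ?_ ?_
      · intro i
        by_cases h : i = e0 <;> simp [Pi.single_apply, h]
      · intro h
        have := congrFun h e0
        simp at this
    have key : ∀ m k : ℤ,
        mkHeis (0 : Fin n → ℤ) (Pi.single e0 1) k ∈ conjCone (gm m) (heisCone n) ↔
          0 ≤ k + m := by
      intro m k
      rw [mem_conjCone]
      set t := mkHeis (0 : Fin n → ℤ) (Pi.single e0 1) k with ht
      have hat : avH t = 0 := avH_mkHeis _ _ _
      have h1 : avH (gm m * t * (gm m)⁻¹) = 0 := conj_avH _ _ hat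
      have h2 : bvH (gm m * t * (gm m)⁻¹) = Pi.single e0 1 := by
        rw [conj_bvH]; exact bvH_mkHeis _ _ _
      have h3 : cvH (gm m * t * (gm m)⁻¹) = k + m := by
        rw [conj_cvH _ _ hat, cvH_mkHeis, ht, bvH_mkHeis, hgm, avH_mkHeis]
        have hs : (∑ i : Fin n, Pi.single e0 m i * Pi.single e0 (1 : ℤ) i) = m := by
          rw [Finset.sum_eq_single e0]
          · simp
          · intro i _ hi
            simp [Pi.single_apply, hi]
          · intro h; exact absurd (Finset.mem_univ e0) h
        rw [hs]
      simp only [heisCone, Set.mem_setOf_eq, h1, h2, h3, toLex_zero']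
      constructor
      · rintro (habs | ⟨-, hc | ⟨hc, -⟩⟩)
        · exact absurd habs (lt_irrefl _)
        · omega
        · omega
      · intro hk
        right
        refine ⟨trivial, ?_⟩
        rcases lt_or_eq_of_le hk with h | h
        · left; exact h
        · right; exact ⟨h.symm, hbpos⟩
    refine Set.infinite_of_injective_forall_mem
      (f := fun m : ℤ => conjCone (gm m) (heisCone n)) ?_ ?_
    · intro m m' h
      simp only at h
      have t1 : mkHeis (0 : Fin n → ℤ) (Pi.single e0 1) (-m) ∈ conjCone (gm m) (heisCone n) :=
        (key m (-m)).mpr (by omega)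
      rw [h] at t1
      have t2 := (key m' (-m)).mp t1
      have t3 : mkHeis (0 : Fin n → ℤ) (Pi.single e0 1) (-m') ∈ conjCone (gm m') (heisCone n) :=
        (key m' (-m')).mpr (by omega)
      rw [← h] at t3
      have t4 := (key m (-m')).mp t3
      omega
    · intro m
      exact ⟨gm m, rfl⟩
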